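/- The maps Ψ and Φ are mutually inverse bijections between the set F_n of rotation-classes of diagonals of the 2n-gon and the set [n]×[n]. -/

import Mathlib

def rotD (n : ℕ) (p : ℕ × ℕ) : ℕ × ℕ :=
  if p.2 < n then (p.1 + n, p.2 + n)
  else if p.1 < n then (p.2 - n, p.1 + n)
  else (p.1 - n, p.2 - n)

def Diag (n : ℕ) := {p : ℕ × ℕ // p.1 < p.2 ∧ p.2 < 2 * n}

def DiagRel (n : ℕ) (x y : Diag n) : Prop := y.1 = x.1 ∨ y.1 = rotD n x.1

lemma mod3aux {n a : ℕ} (h : a < 3 * n) :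
    a % n = if a < n then a else if a < 2 * n then a - n else a - 2 * n := by
  split
  · exact Nat.mod_eq_of_lt ‹_›
  · split
    · rw [Nat.mod_eq_sub_mod (by omega)]; exact Nat.mod_eq_of_lt (by omega)
    · rw [Nat.mod_eq_sub_mod (by omega), Nat.mod_eq_sub_mod (by omega),
        Nat.mod_eq_of_lt (by omega)]; omega

def psi0 (n : ℕ) (hn : 1 ≤ n) (x : Diag n) : Fin n × Fin n :=
  if x.1.2 - x.1.1 ≤ n then
    (⟨x.1.1 % n, Nat.mod_lt _ hn⟩, ⟨(x.1.2 + n - 1) % n, Nat.mod_lt _ hn⟩)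
  else
    (⟨x.1.2 % n, Nat.mod_lt _ hn⟩, ⟨(x.1.1 + n - 1) % n, Nat.mod_lt _ hn⟩)

def phi (n : ℕ) (p : Fin n × Fin n) : Quot (DiagRel n) :=
  if h : (p.1 : ℕ) ≤ (p.2 : ℕ) then
    Quot.mk _ (⟨((p.1 : ℕ), (p.2 : ℕ) + 1), ⟨show (p.1 : ℕ) + 1 ≤ (p.2 : ℕ) + 1 by omega,
      show (p.2 : ℕ) + 1 + 1 ≤ 2 * n by have := p.2.isLt; omega⟩⟩ : Diag n)
  else
    Quot.mk _ (⟨((p.1 : ℕ), (p.2 : ℕ) + 1 + n), ⟨show (p.1 : ℕ) + 1 ≤ (p.2 : ℕ) + 1 + n by omega,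
      show (p.2 : ℕ) + 1 + n + 1 ≤ 2 * n by have := p.1.isLt; omega⟩⟩ : Diag n)

lemma modcong {n a b : ℕ} (hn : 1 ≤ n) (ha : a < 3 * n) (hb : b < 3 * n)
    (h : a = b ∨ a + n = b ∨ a = b + n ∨ a + 2 * n = b ∨ a = b + 2 * n) :
    a % n = b % n := by
  rw [mod3aux ha, mod3aux hb]; split_ifs <;> omega

lemma psi0_sound (n : ℕ) (hn : 1 ≤ n) :
    ∀ x y : Diag n, DiagRel n x y → psi0 n hn x = psi0 n hn y := by
  rintro ⟨⟨a, b⟩, ha, hb⟩ ⟨⟨c, d⟩, hc, hd⟩ (h | h)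
  · simp only [Prod.mk.injEq] at h
    obtain ⟨rfl, rfl⟩ := h
    rfl
  · simp only [rotD] at h hc hd ha hb
    split_ifs at h <;> simp only [Prod.mk.injEq] at h <;> obtain ⟨rfl, rfl⟩ := h <;>
      simp only [psi0] at hc hd ⊢ <;>
      split_ifs <;>
      first
        | exact absurd rfl (by omega)
        | exact Prod.ext (Fin.ext (modcong hn (by omega) (by omega) (by omega)))
            (Fin.ext (modcong hn (by omega) (by omega) (by omega)))

lemma phi_mk (n : ℕ) (i j : ℕ) (hi : i < n) (hj : j < n) :
    phi n (⟨i, hi⟩, ⟨j, hj⟩) =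
      if h : i ≤ j then Quot.mk _ (⟨(i, j + 1), ⟨by omega, by omega⟩⟩ : Diag n)
      else Quot.mk _ (⟨(i, j + 1 + n), ⟨by omega, by omega⟩⟩ : Diag n) := rfl

theorem stmt_1 (n : ℕ) (hn : 1 ≤ n) :
    ∃ (Ψ : Quot (DiagRel n) → Fin n × Fin n) (Φ : Fin n × Fin n → Quot (DiagRel n)),
      Function.LeftInverse Φ Ψ ∧ Function.RightInverse Φ Ψ ∧
      (∀ (a b : ℕ) (h : a < b ∧ b < 2 * n),
        Ψ (Quot.mk _ (⟨(a, b), h⟩ : Diag n)) =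
          if b - a ≤ n then
            (⟨a % n, Nat.mod_lt _ (by omega)⟩, ⟨(b + n - 1) % n, Nat.mod_lt _ (by omega)⟩)
          else
            (⟨b % n, Nat.mod_lt _ (by omega)⟩, ⟨(a + n - 1) % n, Nat.mod_lt _ (by omega)⟩)) ∧
      (∀ p : Fin n × Fin n,
        Φ p =
          if h : (p.1 : ℕ) ≤ (p.2 : ℕ) then
            Quot.mk _ (⟨((p.1 : ℕ), (p.2 : ℕ) + 1),
              ⟨by omega, by have := p.2.isLt; omega⟩⟩ : Diag n)
          else
            Quot.mk _ (⟨((p.1 : ℕ), (p.2 : ℕ) + 1 + n),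
              ⟨by omega, by have := p.1.isLt; omega⟩⟩ : Diag n)) := by
  refine ⟨Quot.lift (psi0 n hn) (psi0_sound n hn), phi n, ?_, ?_, ?_, ?_⟩
  · -- LeftInverse
    intro q
    induction q using Quot.ind with
    | _ x =>
      obtain ⟨⟨a, b⟩, ha, hb⟩ := x
      have ha' : a < b := ha
      have hb' : b < 2 * n := hb
      show phi n (psi0 n hn ⟨(a, b), ha, hb⟩) = _
      by_cases hba : b - a ≤ n
      · by_cases han : a < n
        · by_cases hbn : b ≤ n
          · -- case 1a
            have h1 : a % n = a := Nat.mod_eq_of_lt (by omega)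
            have h2 : (b + n - 1) % n = b - 1 :=
              (mod3aux (by omega)).trans (by split_ifs <;> omega)
            have e : psi0 n hn ⟨(a, b), ha, hb⟩ = (⟨a, by omega⟩, ⟨b - 1, by omega⟩) := by
              simp only [psi0, if_pos hba]
              exact Prod.ext (Fin.ext h1) (Fin.ext h2)
            rw [e, phi_mk, dif_pos (by omega)]
            exact Quot.sound (Or.inl (Prod.ext rfl (show b = b - 1 + 1 by omega)))
          · -- case 1b
            have h1 : a % n = a := Nat.mod_eq_of_lt (by omega)
            have h2 : (b + n - 1) % n = b - n - 1 :=
              (mod3aux (by omega)).trans (by split_ifs <;> omega)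
            have e : psi0 n hn ⟨(a, b), ha, hb⟩ = (⟨a, by omega⟩, ⟨b - n - 1, by omega⟩) := by
              simp only [psi0, if_pos hba]
              exact Prod.ext (Fin.ext h1) (Fin.ext h2)
            rw [e, phi_mk, dif_neg (by omega)]
            exact Quot.sound (Or.inl (Prod.ext rfl (show b = b - n - 1 + 1 + n by omega)))
        · -- case 1c
          have h1 : a % n = a - n := (mod3aux (by omega)).trans (by split_ifs <;> omega)
          have h2 : (b + n - 1) % n = b - n - 1 :=
            (mod3aux (by omega)).trans (by split_ifs <;> omega)
          have e : psi0 n hn ⟨(a, b), ha, hb⟩ = (⟨a - n, by omega⟩, ⟨b - n - 1, by omega⟩) := by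
            simp only [psi0, if_pos hba]
            exact Prod.ext (Fin.ext h1) (Fin.ext h2)
          rw [e, phi_mk, dif_pos (by omega)]
          refine Quot.sound (Or.inr ?_)
          show (a, b) = rotD n (a - n, b - n - 1 + 1)
          simp only [rotD]
          rw [if_pos (show b - n - 1 + 1 < n by omega)]
          exact Prod.ext (show a = a - n + n by omega) (show b = b - n - 1 + 1 + n by omega)
      · by_cases ha0 : 1 ≤ a
        · -- case 2a
          have h1 : b % n = b - n := (mod3aux (by omega)).trans (by split_ifs <;> omega)
          have h2 : (a + n - 1) % n = a - 1 :=
            (mod3aux (by omega)).trans (by split_ifs <;> omega)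
          have e : psi0 n hn ⟨(a, b), ha, hb⟩ = (⟨b - n, by omega⟩, ⟨a - 1, by omega⟩) := by
            simp only [psi0, if_neg hba]
            exact Prod.ext (Fin.ext h1) (Fin.ext h2)
          rw [e, phi_mk, dif_neg (by omega)]
          refine Quot.sound (Or.inr ?_)
          show (a, b) = rotD n (b - n, a - 1 + 1 + n)
          simp only [rotD]
          rw [if_neg (show ¬ a - 1 + 1 + n < n by omega), if_pos (show b - n < n by omega)]
          exact Prod.ext (show a = a - 1 + 1 + n - n by omega) (show b = b - n + n by omega)
        · -- case 2b
          have h1 : b % n = b - n := (mod3aux (by omega)).trans (by split_ifs <;> omega)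
          have h2 : (a + n - 1) % n = n - 1 :=
            (mod3aux (by omega)).trans (by split_ifs <;> omega)
          have e : psi0 n hn ⟨(a, b), ha, hb⟩ = (⟨b - n, by omega⟩, ⟨n - 1, by omega⟩) := by
            simp only [psi0, if_neg hba]
            exact Prod.ext (Fin.ext h1) (Fin.ext h2)
          rw [e, phi_mk, dif_pos (by omega)]
          refine Quot.sound (Or.inr ?_)
          show (a, b) = rotD n (b - n, n - 1 + 1)
          simp only [rotD]
          rw [if_neg (show ¬ n - 1 + 1 < n by omega), if_pos (show b - n < n by omega)]
          exact Prod.ext (show a = n - 1 + 1 - n by omega) (show b = b - n + n by omega)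
  · -- RightInverse
    intro p
    obtain ⟨⟨i, hi⟩, ⟨j, hj⟩⟩ := p
    simp only [phi]
    split_ifs with h
    · show psi0 n hn _ = _
      simp only [psi0]
      split_ifs <;>
        simp only [Prod.mk.injEq, Fin.mk.injEq, Fin.ext_iff] <;>
        rw [mod3aux (by omega), mod3aux (by omega)] <;> split_ifs <;> omega
    · show psi0 n hn _ = _
      simp only [psi0]
      split_ifs <;>
        simp only [Prod.mk.injEq, Fin.mk.injEq, Fin.ext_iff] <;>
        rw [mod3aux (by omega), mod3aux (by omega)] <;> split_ifs <;> omega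
  · intro a b h; rfl
  · intro p; rfl
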